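/- Let k ≥ 1 and let t be an integer with 3 ≤ t ≤ k+2. If G is a connected finite simple graph with maximum degree Δ(G) ≥ t, then there exists a minimum k-power dominating set S of G such that every vertex in S has degree at least t in G. -/

import Mathlib

namespace PowerProp

open SimpleGraph

variable {V : Type*} {α β : Type*}

/-- The closed neighborhood `N[S]` of a set of vertices. -/
def closedNbhd (G : SimpleGraph V) (S : Set V) : Set V :=
  S ∪ ⋃ v ∈ S, G.neighborSet v

/-- One propagation step of the `k`-power domination process. -/
def propStep (k : ℕ) (G : SimpleGraph V) (S : Set V) : Set V :=
  S ∪ {w | ∃ v ∈ S, w ∈ G.neighborSet v \ S ∧ (G.neighborSet v \ S).ncard ≤ k}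

/-- `S^[t]`: the set observed after `t` steps (step 1 is the domination step). -/
def powerIter (k : ℕ) (G : SimpleGraph V) (S : Set V) : ℕ → Set V
  | 0 => S
  | 1 => closedNbhd G S
  | (t + 2) => propStep k G (powerIter k G S (t + 1))

/-- `S` is a `k`-power dominating set of `G`. -/
def IsPDS (k : ℕ) (G : SimpleGraph V) (S : Set V) : Prop :=
  ∃ l, powerIter k G S l = Set.univ

/-- The `k`-power domination number `γ_{P,k}(G)`. -/
noncomputable def pdNum (k : ℕ) (G : SimpleGraph V) : ℕ :=
  sInf {n | ∃ S : Set V, S.ncard = n ∧ IsPDS k G S}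

/-- `S` is a minimum `k`-power dominating set of `G`. -/
def IsMinPDS (k : ℕ) (G : SimpleGraph V) (S : Set V) : Prop :=
  IsPDS k G S ∧ S.ncard = pdNum k G

/-- `ppt_k(G,S)`, the `k`-power propagation time of `G` with `S`. -/
noncomputable def pptOf (k : ℕ) (G : SimpleGraph V) (S : Set V) : ℕ :=
  sInf {l | powerIter k G S l = Set.univ}

/-- `ppt_k(G)`, the (minimum) `k`-power propagation time of `G`. -/
noncomputable def ppt (k : ℕ) (G : SimpleGraph V) : ℕ :=
  sInf {t | ∃ S : Set V, IsMinPDS k G S ∧ pptOf k G S = t}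

end PowerProp
section Aux

open SimpleGraph PowerProp

variable {V : Type*}

lemma subset_closedNbhd (G : SimpleGraph V) (S : Set V) : S ⊆ closedNbhd G S :=
  Set.subset_union_left

lemma closedNbhd_mono (G : SimpleGraph V) {S T : Set V} (h : S ⊆ T) :
    closedNbhd G S ⊆ closedNbhd G T :=
  Set.union_subset_union h (Set.biUnion_mono h fun _ _ => subset_rfl)

lemma subset_propStep (k : ℕ) (G : SimpleGraph V) (S : Set V) : S ⊆ propStep k G S :=
  Set.subset_union_left

lemma propStep_mono [Fintype V] (k : ℕ) (G : SimpleGraph V) {S T : Set V} (h : S ⊆ T) :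
    propStep k G S ⊆ propStep k G T := by
  intro w hw
  simp only [propStep, Set.mem_union, Set.mem_setOf_eq, Set.mem_diff,
    mem_neighborSet] at hw ⊢
  rcases hw with hw | ⟨v, hv, ⟨hadj, hwS⟩, hcard⟩
  · exact Or.inl (h hw)
  · by_cases hwT : w ∈ T
    · exact Or.inl hwT
    · refine Or.inr ⟨v, h hv, ⟨hadj, hwT⟩, le_trans ?_ hcard⟩
      exact Set.ncard_le_ncard (Set.diff_subset_diff_right h) (Set.toFinite _)

lemma powerIter_shift [Fintype V] (k : ℕ) (G : SimpleGraph V) {S T : Set V}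
    (h0 : S ⊆ powerIter k G T 1) (h1 : powerIter k G S 1 ⊆ powerIter k G T 2) :
    ∀ m, powerIter k G S m ⊆ powerIter k G T (m + 1)
  | 0 => h0
  | 1 => h1
  | (m + 2) => propStep_mono k G (powerIter_shift k G h0 h1 (m + 1))

/-- Replacement lemma: if `v ∈ S` has degree at most `k+1` and `u` is a neighbor of `v`,
then `insert u (S \ {v})` is still a `k`-power dominating set. -/
lemma isPDS_replace [Fintype V] (k : ℕ) (G : SimpleGraph V) {S : Set V} {v u : V}
    (hv : v ∈ S) (hadj : G.Adj v u) (hdeg : (G.neighborSet v).ncard ≤ k + 1)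
    (hS : IsPDS k G S) : IsPDS k G (insert u (S \ {v})) := by
  set T : Set V := insert u (S \ {v}) with hT
  have huT : u ∈ T := Set.mem_insert _ _
  -- S ⊆ N[T]
  have h0 : S ⊆ powerIter k G T 1 := by
    intro x hx
    by_cases hxv : x = v
    · subst hxv
      exact Or.inr (Set.mem_biUnion huT hadj.symm)
    · exact subset_closedNbhd G T (Set.mem_insert_iff.mpr (Or.inr ⟨hx, hxv⟩))
  have hvT1 : v ∈ powerIter k G T 1 := h0 hv
  -- N[v] ⊆ T^[2]
  have hNv : ∀ w ∈ G.neighborSet v, w ∈ powerIter k G T 2 := by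
    intro w hw
    by_cases hwT : w ∈ powerIter k G T 1
    · exact subset_propStep k G _ hwT
    · refine Or.inr ⟨v, hvT1, ⟨hw, hwT⟩, ?_⟩
      have hsub : G.neighborSet v \ powerIter k G T 1 ⊆ G.neighborSet v \ {u} := by
        intro y hy
        refine ⟨hy.1, ?_⟩
        intro hyu
        exact hy.2 (by rw [Set.mem_singleton_iff.mp hyu]; exact subset_closedNbhd G T huT)
      calc (G.neighborSet v \ powerIter k G T 1).ncard
          ≤ (G.neighborSet v \ {u}).ncard := Set.ncard_le_ncard hsub (Set.toFinite _)
        _ = (G.neighborSet v).ncard - 1 := Set.ncard_diff_singleton_of_mem hadj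
        _ ≤ k := by omega
  have h1 : powerIter k G S 1 ⊆ powerIter k G T 2 := by
    intro x hx
    rcases hx with hx | hx
    · exact subset_propStep k G _ (h0 hx)
    · simp only [Set.mem_iUnion] at hx
      obtain ⟨y, hy, hxy⟩ := hx
      by_cases hyv : y = v
      · exact hNv x (hyv ▸ hxy)
      · refine subset_propStep k G _ ?_
        exact Or.inr (Set.mem_biUnion (Set.mem_insert_iff.mpr (Or.inr ⟨hy, hyv⟩)) hxy)
  obtain ⟨l, hl⟩ := hS
  refine ⟨l + 1, ?_⟩
  have := powerIter_shift k G h0 h1 l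
  rw [hl] at this
  exact Set.eq_univ_of_univ_subset this

variable [Fintype V]

/-- distance to a set -/
noncomputable def dHS (G : SimpleGraph V) (H : Set V) (v : V) : ℕ :=
  sInf ((fun h => G.dist v h) '' H)

lemma dHS_exists (G : SimpleGraph V) {H : Set V} (hH : H.Nonempty) (v : V) :
    ∃ h ∈ H, G.dist v h = dHS G H v := by
  have := Nat.sInf_mem (hH.image (fun h => G.dist v h))
  obtain ⟨h, hh, heq⟩ := this
  exact ⟨h, hh, heq⟩

lemma dHS_le (G : SimpleGraph V) {H : Set V} {h : V} (hh : h ∈ H) (v : V) :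
    dHS G H v ≤ G.dist v h :=
  Nat.sInf_le ⟨h, hh, rfl⟩

lemma dHS_eq_zero (G : SimpleGraph V) {H : Set V} {v : V} (hv : v ∈ H) : dHS G H v = 0 :=
  Nat.le_zero.mp (by simpa [SimpleGraph.dist_self] using dHS_le G hv v)

lemma exists_adj_dHS_lt (G : SimpleGraph V) (hconn : G.Connected) {H : Set V}
    (hH : H.Nonempty) {v : V} (hv : v ∉ H) :
    ∃ u, G.Adj v u ∧ dHS G H u < dHS G H v := by
  obtain ⟨h, hh, heq⟩ := dHS_exists G hH v
  have hne : v ≠ h := fun e => hv (e ▸ hh)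
  have hpos : 0 < G.dist v h := hconn.pos_dist_of_ne hne
  obtain ⟨p, hp⟩ := (hconn v h).exists_walk_length_eq_dist
  cases p with
  | nil => exact absurd rfl hne
  | @cons _ u _ hadj q =>
      refine ⟨u, hadj, ?_⟩
      have hq : G.dist u h ≤ q.length := SimpleGraph.dist_le q
      have hlen : q.length + 1 = G.dist v h := by simpa using hp
      calc dHS G H u ≤ G.dist u h := dHS_le G hh u
        _ < G.dist v h := by omega
        _ = dHS G H v := heq

noncomputable def measPDS (G : SimpleGraph V) (H : Set V) (S : Set V) : ℕ :=
  ∑ x ∈ (Set.toFinite S).toFinset, dHS G H x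

lemma measPDS_replace (G : SimpleGraph V) (H : Set V) {S : Set V} {v u : V}
    (hv : v ∈ S) (hu : u ∉ S) :
    measPDS G H (insert u (S \ {v})) + dHS G H v = measPDS G H S + dHS G H u := by
  classical
  have h1 : (Set.toFinite (insert u (S \ {v}))).toFinset
      = insert u ((Set.toFinite (S \ {v})).toFinset) := by
    ext x
    simp only [Set.Finite.mem_toFinset, Finset.mem_insert]
    exact Iff.rfl
  have h2 : (Set.toFinite S).toFinset = insert v ((Set.toFinite (S \ {v})).toFinset) := by
    ext x
    simp only [Set.Finite.mem_toFinset, Finset.mem_insert, Set.mem_diff, Set.mem_singleton_iff]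
    constructor
    · intro hx; by_cases hxv : x = v
      · exact Or.inl hxv
      · exact Or.inr ⟨hx, hxv⟩
    · rintro (rfl | ⟨hx, _⟩) <;> [exact hv; exact hx]
  have humem : u ∉ (Set.toFinite (S \ {v})).toFinset := by
    simp only [Set.Finite.mem_toFinset, Set.mem_diff]; tauto
  have hvmem : v ∉ (Set.toFinite (S \ {v})).toFinset := by
    simp only [Set.Finite.mem_toFinset, Set.mem_diff, Set.mem_singleton_iff]
    tauto
  rw [measPDS, measPDS, h1, h2, Finset.sum_insert humem, Finset.sum_insert hvmem]
  ring

end Aux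

section Main

open SimpleGraph PowerProp

variable {V : Type*} [Fintype V]

lemma main_aux (k t : ℕ) (hk : 1 ≤ k) (htk : t ≤ k + 2)
    (G : SimpleGraph V) (hconn : G.Connected)
    (H : Set V) (hHdef : H = {w | t ≤ (G.neighborSet w).ncard}) (hH : H.Nonempty) :
    ∀ n, ∀ S : Set V, IsMinPDS k G S → measPDS G H S ≤ n →
      ∃ S' : Set V, IsMinPDS k G S' ∧ ∀ v ∈ S', v ∈ H := by
  intro n
  induction n using Nat.strong_induction_on with
  | _ n ih =>
    intro S hS hmeas
    by_cases hall : ∀ v ∈ S, v ∈ H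
    · exact ⟨S, hS, hall⟩
    · push_neg at hall
      obtain ⟨v, hvS, hvH⟩ := hall
      have hdeg : (G.neighborSet v).ncard ≤ k + 1 := by
        have : ¬ t ≤ (G.neighborSet v).ncard := by
          intro hcon; exact hvH (hHdef ▸ hcon)
        omega
      obtain ⟨u, hadj, hdu⟩ := exists_adj_dHS_lt G hconn hH hvH
      have hpds : IsPDS k G (insert u (S \ {v})) :=
        isPDS_replace k G hvS hadj hdeg hS.1
      have hle : pdNum k G ≤ (insert u (S \ {v})).ncard :=
        Nat.sInf_le ⟨insert u (S \ {v}), rfl, hpds⟩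
      have hne : u ≠ v := hadj.ne'
      have huS : u ∉ S := by
        intro huS
        have heq : insert u (S \ {v}) = S \ {v} :=
          Set.insert_eq_self.mpr ⟨huS, hne⟩
        have hcard : (S \ {v}).ncard = S.ncard - 1 :=
          Set.ncard_diff_singleton_of_mem hvS
        have hpos : 0 < S.ncard :=
          Set.ncard_pos (Set.toFinite S) |>.mpr ⟨v, hvS⟩
        rw [heq, hcard, ← hS.2] at hle
        omega
      have hcardT : (insert u (S \ {v})).ncard = S.ncard := by
        rw [Set.ncard_insert_of_notMem (by simp [huS]),
          Set.ncard_diff_singleton_of_mem hvS]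
        have hpos : 0 < S.ncard := Set.ncard_pos (Set.toFinite S) |>.mpr ⟨v, hvS⟩
        omega
      have hmin : IsMinPDS k G (insert u (S \ {v})) := ⟨hpds, hcardT.trans hS.2⟩
      have hmeas' := measPDS_replace G H hvS huS (v := v) (u := u)
      have hlt : measPDS G H (insert u (S \ {v})) < measPDS G H S := by omega
      exact ih (measPDS G H (insert u (S \ {v}))) (by omega) _ hmin le_rfl

end Main

open SimpleGraph PowerProp in
/-- If `3 ≤ t ≤ k+2` and `G` is connected with maximum degree at least `t`, then
there is a minimum `k`-power dominating set all of whose vertices have degree at least `t`. -/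
theorem exists_minPDS_minDegree {V : Type*} [Fintype V]
    (k t : ℕ) (hk : 1 ≤ k) (ht : 3 ≤ t) (htk : t ≤ k + 2)
    (G : SimpleGraph V) (hconn : G.Connected)
    (hΔ : ∃ v : V, t ≤ (G.neighborSet v).ncard) :
    ∃ S : Set V, IsMinPDS k G S ∧ ∀ v ∈ S, t ≤ (G.neighborSet v).ncard := by
  set H : Set V := {w | t ≤ (G.neighborSet w).ncard} with hHdef
  have hH : H.Nonempty := hΔ
  -- there exists some min PDS
  have hne : {n | ∃ S : Set V, S.ncard = n ∧ IsPDS k G S}.Nonempty :=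
    ⟨(Set.univ : Set V).ncard, Set.univ, rfl, ⟨0, rfl⟩⟩
  obtain ⟨S, hScard, hSpds⟩ := Nat.sInf_mem hne
  have hSmin : IsMinPDS k G S := ⟨hSpds, hScard⟩
  obtain ⟨S', hS'min, hS'H⟩ :=
    main_aux k t hk htk G hconn H hHdef hH (measPDS G H S) S hSmin le_rfl
  exact ⟨S', hS'min, fun v hv => hS'H v hv⟩
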